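/- Let 0 < q < 1 and let t be a real number with |t| < 1. Then for every n ≥ 1, identically in z ≠ 0: z^{−1}(1−t z²) C_n[q^{1/2} z] + z(1−t z^{−2}) C_n[q^{−1/2} z] = q^{−n/2}(1−q^{n+1}) C_{n+1}[z] − q^{−n/2}(1−t² q^{n−1}) C_{n−1}[z]. -/

import Mathlib

/-- The q-Pochhammer symbol `(x;q)_k = ∏_{j=0}^{k-1} (1 - x qʲ)`. -/
noncomputable def qPoch (x q : ℂ) (k : ℕ) : ℂ := ∏ j ∈ Finset.range k, (1 - x * q ^ j)

/-- The continuous q-ultraspherical polynomial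
`Cₙ[z] = Σ_{k=0}^{n} (t;q)_k (t;q)_{n-k} / ((q;q)_k (q;q)_{n-k}) z^{n-2k}`. -/
noncomputable def cqUltra (q t : ℝ) (n : ℕ) (z : ℂ) : ℂ :=
  ∑ k ∈ Finset.range (n + 1),
    qPoch (t : ℂ) (q : ℂ) k * qPoch (t : ℂ) (q : ℂ) (n - k) /
        (qPoch (q : ℂ) (q : ℂ) k * qPoch (q : ℂ) (q : ℂ) (n - k)) *
      z ^ ((n : ℤ) - 2 * (k : ℤ))

noncomputable def aa (q t : ℝ) (n k : ℕ) : ℂ :=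
  qPoch (t : ℂ) (q : ℂ) k * qPoch (t : ℂ) (q : ℂ) (n - k) /
    (qPoch (q : ℂ) (q : ℂ) k * qPoch (q : ℂ) (q : ℂ) (n - k))

lemma qPoch_succ (x q : ℂ) (k : ℕ) :
    qPoch x q (k + 1) = qPoch x q k * (1 - x * q ^ k) := Finset.prod_range_succ _ _

lemma qPoch_zero (x q : ℂ) : qPoch x q 0 = 1 := Finset.prod_range_zero _

lemma one_sub_ne {q : ℝ} (hq0 : 0 < q) (hq1 : q < 1) (j : ℕ) :
    (1 : ℂ) - (q : ℂ) * (q : ℂ) ^ j ≠ 0 := by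
  have hj : q ^ j ≤ 1 := pow_le_one₀ hq0.le hq1.le
  have h2 : (1 - q * q ^ j : ℝ) ≠ 0 := by nlinarith
  have h3 : ((1 - q * q ^ j : ℝ) : ℂ) = 1 - (q : ℂ) * (q : ℂ) ^ j := by push_cast; ring
  rw [← h3]
  exact_mod_cast h2

lemma qPoch_q_ne {q : ℝ} (hq0 : 0 < q) (hq1 : q < 1) (k : ℕ) :
    qPoch (q : ℂ) (q : ℂ) k ≠ 0 := by
  unfold qPoch
  exact Finset.prod_ne_zero_iff.2 fun j _ => one_sub_ne hq0 hq1 j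

lemma cqUltra_eq (q t : ℝ) (n : ℕ) (x : ℂ) (hx : x ≠ 0) :
    cqUltra q t n x
      = ∑ k ∈ Finset.range (n + 1), aa q t n k * (x ^ n * ((x ^ 2)⁻¹) ^ k) := by
  unfold cqUltra aa
  refine Finset.sum_congr rfl fun k _ => ?_
  congr 1
  rw [show (n : ℤ) - 2 * (k : ℤ) = (n : ℤ) - ((2 * k : ℕ) : ℤ) by push_cast; ring,
    zpow_sub₀ hx, zpow_natCast, zpow_natCast, pow_mul, div_eq_mul_inv, inv_pow]


lemma key (q t : ℝ) (hq0 : 0 < q) (hq1 : q < 1) (n k : ℕ) (hk : k < n) :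
    aa q t n k * ((q : ℂ) ^ (n - k) - (t : ℂ) * (q : ℂ) ^ k)
      + aa q t n (k + 1) * ((q : ℂ) ^ (k + 1) - (t : ℂ) * (q : ℂ) ^ (n - (k + 1)))
    = (1 - (q : ℂ) ^ (n + 1)) * aa q t (n + 1) (k + 1)
      - (1 - (t : ℂ) ^ 2 * (q : ℂ) ^ (n - 1)) * aa q t (n - 1) k := by
  obtain ⟨m, rfl⟩ : ∃ m, n = k + m + 1 := ⟨n - k - 1, by omega⟩
  unfold aa
  rw [show k + m + 1 - k = m + 1 from by omega,
      show k + m + 1 - (k + 1) = m from by omega,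
      show k + m + 1 + 1 - (k + 1) = m + 1 from by omega,
      show k + m + 1 - 1 = k + m from by omega,
      show k + m - k = m from by omega]
  simp only [qPoch_succ]
  have hQk := qPoch_q_ne hq0 hq1 k
  have hQm := qPoch_q_ne hq0 hq1 m
  have h1k := one_sub_ne hq0 hq1 k
  have h1m := one_sub_ne hq0 hq1 m
  simp only [← pow_succ'] at *
  field_simp
  ring

lemma edge0 (q t : ℝ) (hq0 : 0 < q) (hq1 : q < 1) (n : ℕ) :
    aa q t n 0 * (1 - (t : ℂ) * (q : ℂ) ^ n)
      = (1 - (q : ℂ) ^ (n + 1)) * aa q t (n + 1) 0 := by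
  unfold aa
  simp only [Nat.sub_zero, qPoch_zero, one_mul, qPoch_succ]
  have hQn := qPoch_q_ne hq0 hq1 n
  have h1n := one_sub_ne hq0 hq1 n
  simp only [← pow_succ'] at *
  field_simp

lemma edgeN (q t : ℝ) (hq0 : 0 < q) (hq1 : q < 1) (n : ℕ) :
    aa q t n n * (1 - (t : ℂ) * (q : ℂ) ^ n)
      = (1 - (q : ℂ) ^ (n + 1)) * aa q t (n + 1) (n + 1) := by
  unfold aa
  simp only [Nat.sub_self, Nat.add_sub_cancel, qPoch_zero, mul_one, qPoch_succ]
  have hQn := qPoch_q_ne hq0 hq1 n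
  have h1n := one_sub_ne hq0 hq1 n
  simp only [← pow_succ'] at *
  field_simp

lemma core' (q t : ℝ) (hq0 : 0 < q) (hq1 : q < 1) (n : ℕ) (w : ℂ) :
    (w - (t : ℂ)) * ((q : ℂ) ^ n *
        ∑ k ∈ Finset.range (n + 1), aa q t n k * (((q : ℂ)⁻¹) ^ k * w ^ k))
      + (1 - (t : ℂ) * w) *
        ∑ k ∈ Finset.range (n + 1), aa q t n k * ((q : ℂ) ^ k * w ^ k)
    = (1 - (q : ℂ) ^ (n + 1)) *
        ∑ k ∈ Finset.range (n + 2), aa q t (n + 1) k * w ^ k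
      - (1 - (t : ℂ) ^ 2 * (q : ℂ) ^ (n - 1)) *
        ∑ k ∈ Finset.range n, aa q t (n - 1) k * w ^ (k + 1) := by
  have hq0' : (q : ℂ) ≠ 0 := by exact_mod_cast hq0.ne'
  have hmerge : (w - (t : ℂ)) * ((q : ℂ) ^ n *
        ∑ k ∈ Finset.range (n + 1), aa q t n k * (((q : ℂ)⁻¹) ^ k * w ^ k))
      + (1 - (t : ℂ) * w) *
        ∑ k ∈ Finset.range (n + 1), aa q t n k * ((q : ℂ) ^ k * w ^ k)
      = ∑ k ∈ Finset.range (n + 1),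
          (aa q t n k * (((q : ℂ) ^ (n - k) - (t : ℂ) * (q : ℂ) ^ k) * w ^ (k + 1))
            + aa q t n k * (((q : ℂ) ^ k - (t : ℂ) * (q : ℂ) ^ (n - k)) * w ^ k)) := by
    simp only [Finset.mul_sum]
    rw [← Finset.sum_add_distrib]
    refine Finset.sum_congr rfl fun k hk => ?_
    have hk' : k ≤ n := Nat.lt_succ_iff.mp (Finset.mem_range.mp hk)
    rw [show (q : ℂ) ^ n = (q : ℂ) ^ (n - k) * (q : ℂ) ^ k from
      (pow_sub_mul_pow (q : ℂ) hk').symm, inv_pow]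
    field_simp
    ring
  rw [Finset.sum_add_distrib] at hmerge
  have hU : ∑ k ∈ Finset.range (n + 1),
        aa q t n k * (((q : ℂ) ^ (n - k) - (t : ℂ) * (q : ℂ) ^ k) * w ^ (k + 1))
      = (∑ k ∈ Finset.range n,
          aa q t n k * (((q : ℂ) ^ (n - k) - (t : ℂ) * (q : ℂ) ^ k) * w ^ (k + 1)))
        + aa q t n n * (((q : ℂ) ^ (n - n) - (t : ℂ) * (q : ℂ) ^ n) * w ^ (n + 1)) :=
    Finset.sum_range_succ _ n
  have hV : ∑ k ∈ Finset.range (n + 1),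
        aa q t n k * (((q : ℂ) ^ k - (t : ℂ) * (q : ℂ) ^ (n - k)) * w ^ k)
      = (∑ k ∈ Finset.range n,
          aa q t n (k + 1) * (((q : ℂ) ^ (k + 1) - (t : ℂ) * (q : ℂ) ^ (n - (k + 1))) * w ^ (k + 1)))
        + aa q t n 0 * (((q : ℂ) ^ 0 - (t : ℂ) * (q : ℂ) ^ (n - 0)) * w ^ 0) :=
    Finset.sum_range_succ' _ n
  have hB : ∑ k ∈ Finset.range (n + 2), aa q t (n + 1) k * w ^ k
      = ((∑ k ∈ Finset.range n, aa q t (n + 1) (k + 1) * w ^ (k + 1))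
          + aa q t (n + 1) (n + 1) * w ^ (n + 1))
        + aa q t (n + 1) 0 * w ^ 0 := by
    rw [Finset.sum_range_succ' _ (n + 1), Finset.sum_range_succ]
  have hmid : ∑ k ∈ Finset.range n,
        (aa q t n k * (((q : ℂ) ^ (n - k) - (t : ℂ) * (q : ℂ) ^ k) * w ^ (k + 1))
          + aa q t n (k + 1) * (((q : ℂ) ^ (k + 1) - (t : ℂ) * (q : ℂ) ^ (n - (k + 1))) * w ^ (k + 1)))
      = ∑ k ∈ Finset.range n,
        ((1 - (q : ℂ) ^ (n + 1)) * (aa q t (n + 1) (k + 1) * w ^ (k + 1))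
          - (1 - (t : ℂ) ^ 2 * (q : ℂ) ^ (n - 1)) * (aa q t (n - 1) k * w ^ (k + 1))) := by
    refine Finset.sum_congr rfl fun k hk => ?_
    have hkn : k < n := Finset.mem_range.mp hk
    linear_combination w ^ (k + 1) * key q t hq0 hq1 n k hkn
  rw [Finset.sum_add_distrib, Finset.sum_sub_distrib, ← Finset.mul_sum, ← Finset.mul_sum]
    at hmid
  have h0 : aa q t n 0 * (((q : ℂ) ^ 0 - (t : ℂ) * (q : ℂ) ^ (n - 0)) * w ^ 0)
      = (1 - (q : ℂ) ^ (n + 1)) * (aa q t (n + 1) 0 * w ^ 0) := by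
    simp only [Nat.sub_zero, pow_zero, mul_one]
    linear_combination edge0 q t hq0 hq1 n
  have hNN : aa q t n n * (((q : ℂ) ^ (n - n) - (t : ℂ) * (q : ℂ) ^ n) * w ^ (n + 1))
      = (1 - (q : ℂ) ^ (n + 1)) * (aa q t (n + 1) (n + 1) * w ^ (n + 1)) := by
    simp only [Nat.sub_self, pow_zero]
    linear_combination w ^ (n + 1) * edgeN q t hq0 hq1 n
  linear_combination hmerge + hU + hV + hmid + h0 + hNN
    - (1 - (q : ℂ) ^ (n + 1)) * hB

/-- **A structure relation with a non-skew-symmetric operator for continuous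
q-ultraspherical polynomials**, equation (6.6) of the paper. -/
theorem cq_ultraspherical_structure_relation' (q t : ℝ) (hq0 : 0 < q) (hq1 : q < 1)
    (ht : |t| < 1) (n : ℕ) (hn : 1 ≤ n) :
    ∀ z : ℂ, z ≠ 0 →
      z⁻¹ * (1 - (t : ℂ) * z ^ 2) * cqUltra q t n (((q ^ ((1 : ℝ) / 2) : ℝ) : ℂ) * z) +
          z * (1 - (t : ℂ) * z ^ (-2 : ℤ)) *
            cqUltra q t n (((q ^ (-(1 : ℝ) / 2) : ℝ) : ℂ) * z) =
        (((q ^ (-(n : ℝ) / 2) * (1 - q ^ ((n : ℝ) + 1)) : ℝ) : ℂ)) * cqUltra q t (n + 1) z -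
          (((q ^ (-(n : ℝ) / 2) * (1 - t ^ 2 * q ^ ((n : ℝ) - 1)) : ℝ) : ℂ)) *
            cqUltra q t (n - 1) z := by
  intro z hz
  have hrpos : 0 < q ^ ((1 : ℝ) / 2) := Real.rpow_pos_of_pos hq0 _
  have hr2 : (q ^ ((1 : ℝ) / 2)) ^ 2 = q := by
    rw [← Real.rpow_natCast (q ^ ((1 : ℝ) / 2)) 2, ← Real.rpow_mul hq0.le]
    norm_num
  have hneg_half : q ^ (-(1 : ℝ) / 2) = (q ^ ((1 : ℝ) / 2))⁻¹ := by
    rw [show -(1 : ℝ) / 2 = -((1 : ℝ) / 2) by ring, Real.rpow_neg hq0.le]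
  have hneg_n : q ^ (-(n : ℝ) / 2) = ((q ^ ((1 : ℝ) / 2)) ^ n)⁻¹ := by
    rw [show -(n : ℝ) / 2 = -((1 : ℝ) / 2 * n) by ring, Real.rpow_neg hq0.le,
      Real.rpow_mul hq0.le, Real.rpow_natCast]
  have hpow1 : q ^ ((n : ℝ) + 1) = q ^ (n + 1) := by
    rw [show ((n : ℝ) + 1) = ((n + 1 : ℕ) : ℝ) by push_cast; ring, Real.rpow_natCast]
  have hpow2 : q ^ ((n : ℝ) - 1) = q ^ (n - 1) := by
    rw [show ((n : ℝ) - 1) = ((n - 1 : ℕ) : ℝ) by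
        rw [Nat.cast_sub hn]; norm_num, Real.rpow_natCast]
  rw [hneg_half, hneg_n, hpow1, hpow2]
  push_cast
  set c : ℂ := ((q ^ ((1 : ℝ) / 2) : ℝ) : ℂ) with hcdef
  have hc0 : c ≠ 0 := by
    rw [hcdef]
    exact_mod_cast hrpos.ne'
  have hc2 : c ^ 2 = (q : ℂ) := by
    rw [hcdef]
    exact_mod_cast hr2
  have hq0' : (q : ℂ) ≠ 0 := by exact_mod_cast hq0.ne'
  have hq2n : (q : ℂ) ^ n = c ^ n * c ^ n := by
    rw [← mul_pow, ← sq, hc2]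
  have main := core' q t hq0 hq1 n ((z ^ 2)⁻¹)
  have e1 : z⁻¹ * (1 - (t : ℂ) * z ^ 2) * cqUltra q t n (c * z)
      = z ^ (n + 1) * (c ^ n)⁻¹ * (((z ^ 2)⁻¹ - (t : ℂ)) * ((q : ℂ) ^ n *
          ∑ k ∈ Finset.range (n + 1),
            aa q t n k * (((q : ℂ)⁻¹) ^ k * ((z ^ 2)⁻¹) ^ k))) := by
    have hs : z⁻¹ * (1 - (t : ℂ) * z ^ 2) * (c ^ n * z ^ n)
        = z ^ (n + 1) * (c ^ n)⁻¹ * (((z ^ 2)⁻¹ - (t : ℂ)) * (c ^ n * c ^ n)) := by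
      field_simp
      ring
    rw [cqUltra_eq q t n (c * z) (mul_ne_zero hc0 hz)]
    simp only [Finset.mul_sum]
    refine Finset.sum_congr rfl fun k hk => ?_
    rw [mul_pow c z n, show ((c * z) ^ 2)⁻¹ = (q : ℂ)⁻¹ * (z ^ 2)⁻¹ by
        rw [mul_pow, hc2, mul_inv], mul_pow, hq2n]
    linear_combination (aa q t n k * (((q : ℂ)⁻¹) ^ k * ((z ^ 2)⁻¹) ^ k)) * hs
  have e2 : z * (1 - (t : ℂ) * z ^ (-2 : ℤ)) * cqUltra q t n (c⁻¹ * z)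
      = z ^ (n + 1) * (c ^ n)⁻¹ * ((1 - (t : ℂ) * (z ^ 2)⁻¹) *
          ∑ k ∈ Finset.range (n + 1),
            aa q t n k * ((q : ℂ) ^ k * ((z ^ 2)⁻¹) ^ k)) := by
    rw [show z ^ (-2 : ℤ) = (z ^ 2)⁻¹ by
        rw [zpow_neg]; norm_cast,
      cqUltra_eq q t n (c⁻¹ * z) (mul_ne_zero (inv_ne_zero hc0) hz)]
    simp only [Finset.mul_sum]
    refine Finset.sum_congr rfl fun k hk => ?_
    rw [mul_pow c⁻¹ z n, inv_pow c n, show ((c⁻¹ * z) ^ 2)⁻¹ = (q : ℂ) * (z ^ 2)⁻¹ by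
        rw [mul_pow, inv_pow, ← hc2, mul_inv, inv_inv], mul_pow]
    ring
  have e3 : (c ^ n)⁻¹ * (1 - (q : ℂ) ^ (n + 1)) * cqUltra q t (n + 1) z
      = z ^ (n + 1) * (c ^ n)⁻¹ * ((1 - (q : ℂ) ^ (n + 1)) *
          ∑ k ∈ Finset.range (n + 2),
            aa q t (n + 1) k * ((z ^ 2)⁻¹) ^ k) := by
    rw [cqUltra_eq q t (n + 1) z hz]
    simp only [Finset.mul_sum]
    refine Finset.sum_congr rfl fun k hk => ?_
    ring
  have e4 : (c ^ n)⁻¹ * (1 - (t : ℂ) ^ 2 * (q : ℂ) ^ (n - 1)) * cqUltra q t (n - 1) z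
      = z ^ (n + 1) * (c ^ n)⁻¹ * ((1 - (t : ℂ) ^ 2 * (q : ℂ) ^ (n - 1)) *
          ∑ k ∈ Finset.range n,
            aa q t (n - 1) k * ((z ^ 2)⁻¹) ^ (k + 1)) := by
    rw [cqUltra_eq q t (n - 1) z hz, show n - 1 + 1 = n from by omega]
    have hS1 : ∑ k ∈ Finset.range n, aa q t (n - 1) k * (z ^ (n - 1) * ((z ^ 2)⁻¹) ^ k)
        = z ^ (n - 1) * ∑ k ∈ Finset.range n, aa q t (n - 1) k * ((z ^ 2)⁻¹) ^ k := by
      rw [Finset.mul_sum]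
      exact Finset.sum_congr rfl fun k _ => by ring
    have hS2 : ∑ k ∈ Finset.range n, aa q t (n - 1) k * ((z ^ 2)⁻¹) ^ (k + 1)
        = (z ^ 2)⁻¹ * ∑ k ∈ Finset.range n, aa q t (n - 1) k * ((z ^ 2)⁻¹) ^ k := by
      rw [Finset.mul_sum]
      exact Finset.sum_congr rfl fun k _ => by ring
    have hsz : z ^ (n - 1) = z ^ (n + 1) * (z ^ 2)⁻¹ := by
      rw [show z ^ (n + 1) = z ^ (n - 1) * z ^ 2 by rw [← pow_add]; congr 1; omega,
        mul_assoc, mul_inv_cancel₀ (pow_ne_zero 2 hz), mul_one]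
    rw [hS1, hS2, hsz]
    ring
  linear_combination e1 + e2 - e3 + e4 + (z ^ (n + 1) * (c ^ n)⁻¹) * main
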